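/- Fix $M \geq 1$. The poset of all reading lists — tuples $(S^1,\dots,S^n)$ of $d$-element subsets of $[Md]$ for all $d, n \geq 0$ — ordered by $S_{(d,n)} \leq T_{(e,m)}$ iff there exist indices $k_1 < \dots < k_n$ in $[m]$ and a strictly increasing injection $f: \mathbb{N} \to \mathbb{N}$ with $f(S^i) \subseteq T^{k_i}$ for all $i$, is noetherian: it contains no infinite antichain and no infinite strictly decreasing sequence. -/

import Mathlib

/-- A reading list of type `(d, n)` with parameter `M`: a tuple `(S¹, …, Sⁿ)` where each
`Sⁱ` is a `d`-element subset of `[M·d] = {1, …, M·d}`. -/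
structure ReadingList (M : ℕ) where
  d : ℕ
  n : ℕ
  S : Fin n → Finset ℕ
  subset_range : ∀ i, S i ⊆ Finset.Icc 1 (M * d)
  card_eq : ∀ i, (S i).card = d

/-- The reading list order: `A ≤ B` iff there is a strictly increasing injection `f` on
indices and strictly increasing indices `k₁ < ⋯ < kₙ` with `f(Aⁱ) ⊆ B^{kᵢ}` for all `i`. -/
def ReadingList.le {M : ℕ} (A B : ReadingList M) : Prop :=
  ∃ (f : ℕ → ℕ) (k : Fin A.n → Fin B.n), StrictMono f ∧ StrictMono k ∧
    ∀ i, (A.S i).image f ⊆ B.S (k i)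

namespace RLAux

theorem le_trans' {M : ℕ} {A B C : ReadingList M} (h1 : A.le B) (h2 : B.le C) : A.le C := by
  obtain ⟨f1, k1, hf1, hk1, hs1⟩ := h1
  obtain ⟨f2, k2, hf2, hk2, hs2⟩ := h2
  refine ⟨f2 ∘ f1, k2 ∘ k1, hf2.comp hf1, hk2.comp hk1, fun i => ?_⟩
  have : (A.S i).image (f2 ∘ f1) = ((A.S i).image f1).image f2 := by
    rw [Finset.image_image]
  rw [this]
  exact (Finset.image_subset_image (hs1 i)).trans (hs2 (k1 i))

/-- Extension lemma: given a `c`-element subset `C` of `[1, N]`, there is a strictly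
monotone `f : ℕ → ℕ` mapping `[1, c]` into `C`. -/
theorem ext_lemma (C : Finset ℕ) (c N : ℕ) (hC : C ⊆ Finset.Icc 1 N) (hc : C.card = c) :
    ∃ f : ℕ → ℕ, StrictMono f ∧ ∀ x, 1 ≤ x → x ≤ c → f x ∈ C := by
  classical
  set e := C.orderEmbOfFin hc with he
  have hmem : ∀ i : Fin c, e i ∈ C := fun i => C.orderEmbOfFin_mem hc i
  have hbnd : ∀ i : Fin c, 1 ≤ e i ∧ e i ≤ N := by
    intro i
    have := hC (hmem i)
    simpa [Finset.mem_Icc] using this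
  refine ⟨fun x => if hx : 1 ≤ x ∧ x ≤ c then e ⟨x - 1, by omega⟩ else if x = 0 then 0 else N + x,
    ?_, ?_⟩
  · intro x y hxy
    dsimp only
    by_cases hx : 1 ≤ x ∧ x ≤ c <;> by_cases hy : 1 ≤ y ∧ y ≤ c
    · rw [dif_pos hx, dif_pos hy]
      exact e.strictMono (by simp only [Fin.lt_def]; omega)
    · rw [dif_pos hx, dif_neg hy, if_neg (by omega : ¬ y = 0)]
      have := (hbnd ⟨x - 1, by omega⟩).2
      omega
    · rw [dif_neg hx, dif_pos hy, if_pos (by omega : x = 0)]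
      have := (hbnd ⟨y - 1, by omega⟩).1
      omega
    · rw [dif_neg hx, dif_neg hy, if_neg (by omega : ¬ y = 0)]
      by_cases hx0 : x = 0
      · rw [if_pos hx0]; omega
      · rw [if_neg hx0]; omega
  · intro x h1 h2
    dsimp only
    rw [dif_pos (⟨h1, h2⟩ : 1 ≤ x ∧ x ≤ c)]
    exact hmem _


/-- Greedy intersection lemma. -/
theorem greedy {M : ℕ} (hM : 1 ≤ M) (B : ReadingList M) :
    ∀ c : ℕ, 2 * c ≤ B.d → ∃ (C : Finset ℕ) (R : Finset (Fin B.n)),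
      C.card = c ∧ C ⊆ Finset.Icc 1 (M * B.d) ∧ B.n ≤ (2 * M) ^ c * R.card ∧
      ∀ r ∈ R, C ⊆ B.S r := by
  classical
  intro c
  induction c with
  | zero =>
    intro _
    refine ⟨∅, Finset.univ, by simp, by simp, ?_, by simp⟩
    simp [Finset.card_univ]
  | succ c ih =>
    intro hc
    obtain ⟨C, R, hCcard, hCsub, hRcard, hRcom⟩ := ih (by omega)
    have hMd : c < M * B.d := by nlinarith
    rcases Finset.eq_empty_or_nonempty R with hR | hR
    · -- R empty : B.n = 0, pick any (c+1)-subset of the interval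
      subst hR
      simp only [Finset.card_empty, Nat.mul_zero, Nat.le_zero] at hRcard
      obtain ⟨C', hC'sub, hC'card⟩ :=
        Finset.exists_subset_card_eq (s := Finset.Icc 1 (M * B.d)) (n := c + 1)
          (by simp [Nat.card_Icc]; omega)
      exact ⟨C', ∅, hC'card, hC'sub, by simp [hRcard], by simp⟩
    · set T := Finset.Icc 1 (M * B.d) \ C with hT
      have hTcard : T.card = M * B.d - c := by
        rw [Finset.card_sdiff_of_subset hCsub, Nat.card_Icc, hCcard]
        omega
      have hTne : T.Nonempty := by
        rw [← Finset.card_pos, hTcard]; omega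
      -- counting
      have hdouble : ∀ r ∈ R, B.d - c ≤ (T.filter (fun col => col ∈ B.S r)).card := by
        intro r _
        have hset : T.filter (fun col => col ∈ B.S r) = B.S r \ C := by
          ext col
          simp only [hT, Finset.mem_filter, Finset.mem_sdiff]
          constructor
          · rintro ⟨⟨_, h2⟩, h3⟩; exact ⟨h3, h2⟩
          · rintro ⟨h1, h2⟩; exact ⟨⟨B.subset_range r h1, h2⟩, h1⟩
        rw [hset]
        have h1 := Finset.card_le_card_sdiff_add_card (s := B.S r) (t := C)
        rw [B.card_eq r, hCcard] at h1
        omega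
      have hswap : ∑ col ∈ T, (R.filter (fun r => col ∈ B.S r)).card
          = ∑ r ∈ R, (T.filter (fun col => col ∈ B.S r)).card := by
        simp only [Finset.card_filter]
        rw [Finset.sum_comm]
      have hsum : R.card * (B.d - c) ≤ ∑ col ∈ T, (R.filter (fun r => col ∈ B.S r)).card := by
        rw [hswap]
        calc R.card * (B.d - c) = ∑ _r ∈ R, (B.d - c) := by
              rw [Finset.sum_const, smul_eq_mul]
          _ ≤ _ := Finset.sum_le_sum hdouble
      obtain ⟨col, hcolT, hcolmax⟩ := T.exists_max_image
        (fun col => (R.filter (fun r => col ∈ B.S r)).card) hTne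
      have hmax : ∑ col ∈ T, (R.filter (fun r => col ∈ B.S r)).card
          ≤ T.card * (R.filter (fun r => col ∈ B.S r)).card := by
        calc ∑ c ∈ T, (R.filter (fun r => c ∈ B.S r)).card
            ≤ ∑ _c ∈ T, (R.filter (fun r => col ∈ B.S r)).card :=
              Finset.sum_le_sum hcolmax
          _ = T.card * (R.filter (fun r => col ∈ B.S r)).card := by
              rw [Finset.sum_const, smul_eq_mul]
      set cnt := (R.filter (fun r => col ∈ B.S r)).card with hcnt
      have key : R.card ≤ 2 * M * cnt := by
        have h1 : R.card * (B.d - c) ≤ (M * B.d - c) * cnt := by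
          calc R.card * (B.d - c) ≤ _ := hsum
            _ ≤ T.card * cnt := hmax
            _ = (M * B.d - c) * cnt := by rw [hTcard]
        have h2 : (M * B.d - c) * cnt ≤ M * B.d * cnt := by
          exact Nat.mul_le_mul_right _ (by omega)
        have h3 : R.card * B.d ≤ 2 * M * B.d * cnt := by
          have h4 : B.d ≤ 2 * (B.d - c) := by omega
          calc R.card * B.d ≤ R.card * (2 * (B.d - c)) := Nat.mul_le_mul_left _ h4
            _ = 2 * (R.card * (B.d - c)) := by ring
            _ ≤ 2 * (M * B.d * cnt) := by
                have := h1.trans h2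
                omega
            _ = 2 * M * B.d * cnt := by ring
        have hd0 : 0 < B.d := by omega
        have := Nat.le_of_mul_le_mul_right (a := R.card) (b := 2 * M * cnt) (by
          calc R.card * B.d ≤ 2 * M * B.d * cnt := h3
            _ = 2 * M * cnt * B.d := by ring) hd0
        omega
      have hcolnC : col ∉ C := (Finset.mem_sdiff.mp hcolT).2
      refine ⟨insert col C, R.filter (fun r => col ∈ B.S r),
        by rw [Finset.card_insert_of_notMem hcolnC, hCcard],
        ?_, ?_, ?_⟩
      · apply Finset.insert_subset (Finset.mem_sdiff.mp hcolT).1 hCsub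
      · calc B.n ≤ (2 * M) ^ c * R.card := hRcard
          _ ≤ (2 * M) ^ c * (2 * M * cnt) := Nat.mul_le_mul_left _ key
          _ = (2 * M) ^ (c + 1) * cnt := by ring
      · intro r hr
        rw [Finset.mem_filter] at hr
        exact Finset.insert_subset hr.2 ((hRcom r hr.1).trans (by rfl))

/-- If `B` is much bigger than `A` (in both parameters), then `A ≤ B`. -/
theorem le_of_big {M : ℕ} (hM : 1 ≤ M) (A B : ReadingList M)
    (hd : 2 * (M * A.d) ≤ B.d) (hn : (2 * M) ^ (M * A.d) * A.n ≤ B.n) : A.le B := by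
  classical
  obtain ⟨C, R, hCcard, hCsub, hRcard, hRcom⟩ := greedy hM B (M * A.d) hd
  have hpow : 0 < (2 * M) ^ (M * A.d) := pow_pos (by omega) _
  have hAn : A.n ≤ R.card := by
    by_contra h
    push_neg at h
    have : (2 * M) ^ (M * A.d) * R.card < (2 * M) ^ (M * A.d) * A.n :=
      (Nat.mul_lt_mul_left hpow).mpr h
    omega
  obtain ⟨R'', hR''sub, hR''card⟩ := Finset.exists_subset_card_eq (s := R) (n := A.n) hAn
  obtain ⟨f, hf, hfmem⟩ := ext_lemma C (M * A.d) (M * B.d) hCsub hCcard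
  refine ⟨f, fun i => R''.orderEmbOfFin hR''card i, hf,
    fun i j hij => (R''.orderEmbOfFin hR''card).strictMono hij, fun i => ?_⟩
  intro y hy
  rw [Finset.mem_image] at hy
  obtain ⟨x, hx, rfl⟩ := hy
  have hxI := A.subset_range i hx
  rw [Finset.mem_Icc] at hxI
  have hfx : f x ∈ C := hfmem x hxI.1 hxI.2
  exact hRcom _ (hR''sub (R''.orderEmbOfFin_mem hR''card i)) hfx


theorem subrel {α : Type*} {r : α → α → Prop} {l₁ l₂ : List α} (h : List.SublistForall₂ r l₁ l₂) :
    ∃ φ : Fin l₁.length → Fin l₂.length, StrictMono φ ∧ ∀ i, r (l₁.get i) (l₂.get (φ i)) := by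
  obtain ⟨l', hf, hsub⟩ := List.sublistForall₂_iff.mp h
  obtain ⟨e, he⟩ := List.sublist_iff_exists_fin_orderEmbedding_get_eq.mp hsub
  have hlen : l₁.length = l'.length := hf.length_eq
  have hget := (List.forall₂_iff_get.mp hf).2
  refine ⟨fun i => e (Fin.cast hlen i), fun i j hij => e.strictMono hij, fun i => ?_⟩
  have h1 : r (l₁.get i) (l'.get (Fin.cast hlen i)) := hget i.1 i.2 (by omega)
  rw [← he (Fin.cast hlen i)]
  exact h1

theorem subrelFn {α : Type*} {r : α → α → Prop} {n m : ℕ} {F : Fin n → α} {G : Fin m → α}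
    (h : List.SublistForall₂ r (List.ofFn F) (List.ofFn G)) :
    ∃ ψ : Fin n → Fin m, StrictMono ψ ∧ ∀ v, r (F v) (G (ψ v)) := by
  obtain ⟨φ, hφ, hget⟩ := subrel h
  have ln : (List.ofFn F).length = n := List.length_ofFn
  have lm : (List.ofFn G).length = m := List.length_ofFn
  refine ⟨fun v => Fin.cast lm (φ (Fin.cast ln.symm v)), fun a b hab => hφ hab, fun v => ?_⟩
  have h1 := hget (Fin.cast ln.symm v)
  simp only [List.get_ofFn, Fin.cast_cast, Fin.cast_refl, id] at h1
  exact h1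

theorem good_of_const_d {M : ℕ} (g : ℕ → ReadingList M) (d0 : ℕ) (hd : ∀ t, (g t).d = d0) :
    ∃ i j, i < j ∧ (g i).le (g j) := by
  classical
  have hfin : ({S : Finset ℕ | S ⊆ Finset.Icc 1 (M * d0)}).Finite := by
    apply ((Finset.Icc 1 (M * d0)).powerset.finite_toSet).subset
    intro S hS
    rw [Finset.mem_coe, Finset.mem_powerset]
    exact hS
  haveI : IsRefl (Finset ℕ) (· = ·) := ⟨fun _ => rfl⟩
  haveI : IsTrans (Finset ℕ) (· = ·) := ⟨fun _ _ _ h1 h2 => h1.trans h2⟩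
  obtain ⟨i, j, hij, hrel⟩ :=
    Set.PartiallyWellOrderedOn.partiallyWellOrderedOn_sublistForall₂ (· = ·)
      hfin.partiallyWellOrderedOn
      (fun t => ⟨List.ofFn (fun a : Fin (g t).n => (g t).S a),
      (by
        intro x hx
        simp only [List.mem_ofFn, Set.mem_range] at hx
        obtain ⟨a, rfl⟩ := hx
        have h2 := (g t).subset_range a
        rw [hd t] at h2
        exact h2)⟩)
  obtain ⟨ψ, hψ, hrel2⟩ := subrelFn hrel
  exact ⟨i, j, hij, id, ψ, strictMono_id, hψ, fun a => by
    rw [Finset.image_id, hrel2 a]⟩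

theorem good_of_const_n {M : ℕ} (g : ℕ → ReadingList M) (n0 : ℕ) (hn : ∀ t, (g t).n = n0) :
    ∃ i j, i < j ∧ (g i).le (g j) := by
  classical
  have hfin : ({S : Finset ℕ | S ⊆ Finset.range n0}).Finite := by
    apply ((Finset.range n0).powerset.finite_toSet).subset
    intro S hS
    rw [Finset.mem_coe, Finset.mem_powerset]
    exact hS
  haveI : IsRefl (Finset ℕ) (· ⊆ ·) := ⟨fun _ => Finset.Subset.refl _⟩
  haveI : IsTrans (Finset ℕ) (· ⊆ ·) := ⟨fun _ _ _ h1 h2 => h1.trans h2⟩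
  obtain ⟨i, j, hij, hrel⟩ :=
    Set.PartiallyWellOrderedOn.partiallyWellOrderedOn_sublistForall₂ (· ⊆ ·)
      hfin.partiallyWellOrderedOn
      (fun t => ⟨List.ofFn (fun jc : Fin (M * (g t).d) =>
        (Finset.range n0).filter (fun a => ∃ h : a < (g t).n, (jc.1 + 1) ∈ (g t).S ⟨a, h⟩)),
      (by
        intro x hx
        simp only [List.mem_ofFn, Set.mem_range] at hx
        obtain ⟨a, rfl⟩ := hx
        intro y hy
        exact Finset.mem_of_mem_filter y hy)⟩)
  obtain ⟨ψ, hψ, hrel2⟩ := subrelFn hrel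
  refine ⟨i, j, hij,
    fun x => if hx : 1 ≤ x ∧ x ≤ M * (g i).d then (ψ ⟨x - 1, by omega⟩).1 + 1
      else if x = 0 then 0 else M * (g j).d + x,
    fun a => ⟨a.1, by have h2 := a.2; have e1 := hn i; have e2 := hn j; omega⟩, ?_, ?_, ?_⟩
  · intro x y hxy
    dsimp only
    by_cases hx : 1 ≤ x ∧ x ≤ M * (g i).d <;> by_cases hy : 1 ≤ y ∧ y ≤ M * (g i).d
    · rw [dif_pos hx, dif_pos hy]
      have h3 : ψ ⟨x - 1, by omega⟩ < ψ ⟨y - 1, by omega⟩ :=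
        hψ (show x - 1 < y - 1 by omega)
      have h4 : (ψ ⟨x - 1, by omega⟩).1 < (ψ ⟨y - 1, by omega⟩).1 := h3
      omega
    · rw [dif_pos hx, dif_neg hy, if_neg (by omega : ¬ y = 0)]
      have h3 : (ψ ⟨x - 1, by omega⟩).1 < M * (g j).d := (ψ ⟨x - 1, by omega⟩).2
      omega
    · rw [dif_neg hx, dif_pos hy, if_pos (by omega : x = 0)]
      omega
    · rw [dif_neg hx, dif_neg hy, if_neg (by omega : ¬ y = 0)]
      by_cases hx0 : x = 0
      · rw [if_pos hx0]; omega
      · rw [if_neg hx0]; omega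
  · intro a b hab
    exact hab
  · intro a y hy
    rw [Finset.mem_image] at hy
    obtain ⟨x, hx, rfl⟩ := hy
    have hxI := (g i).subset_range a hx
    rw [Finset.mem_Icc] at hxI
    dsimp only
    rw [dif_pos (⟨hxI.1, hxI.2⟩ : 1 ≤ x ∧ x ≤ M * (g i).d)]
    have hmem1 : a.1 ∈ (Finset.range n0).filter
        (fun b => ∃ h : b < (g i).n, ((⟨x - 1, by omega⟩ : Fin (M * (g i).d)).1 + 1) ∈ (g i).S ⟨b, h⟩) := by
      rw [Finset.mem_filter]
      constructor
      · rw [Finset.mem_range, ← hn i]; exact a.2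
      · refine ⟨a.2, ?_⟩
        have hx1 : x - 1 + 1 = x := by omega
        simp only [hx1]
        have : (⟨a.1, a.2⟩ : Fin (g i).n) = a := rfl
        rw [this]
        exact hx
    have hmem2 := hrel2 ⟨x - 1, by omega⟩ hmem1
    rw [Finset.mem_filter] at hmem2
    obtain ⟨-, h5, h6⟩ := hmem2
    have : (⟨a.1, h5⟩ : Fin (g j).n) = ⟨a.1, by have h2 := a.2; have e1 := hn i; have e2 := hn j; omega⟩ := rfl
    rw [← this]
    exact h6

theorem main_wqo {M : ℕ} (hM : 1 ≤ M) (g : ℕ → ReadingList M) :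
    ∃ i j, i < j ∧ (g i).le (g j) := by
  classical
  by_cases hd : ∃ d0, {t | (g t).d = d0}.Infinite
  · obtain ⟨d0, hI⟩ := hd
    haveI := hI.to_subtype
    let φ := Nat.orderEmbeddingOfSet {t | (g t).d = d0}
    have hφmem : ∀ t, (g (φ t)).d = d0 := by
      intro t
      have h1 : φ t ∈ {t | (g t).d = d0} := by
        rw [← Nat.orderEmbeddingOfSet_range {t | (g t).d = d0}]
        exact Set.mem_range_self t
      exact h1
    obtain ⟨i, j, hij, hle⟩ := good_of_const_d (fun t => g (φ t)) d0 hφmem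
    exact ⟨φ i, φ j, φ.strictMono hij, hle⟩
  · by_cases hn : ∃ n0, {t | (g t).n = n0}.Infinite
    · obtain ⟨n0, hI⟩ := hn
      haveI := hI.to_subtype
      let φ := Nat.orderEmbeddingOfSet {t | (g t).n = n0}
      have hφmem : ∀ t, (g (φ t)).n = n0 := by
        intro t
        have h1 : φ t ∈ {t | (g t).n = n0} := by
          rw [← Nat.orderEmbeddingOfSet_range {t | (g t).n = n0}]
          exact Set.mem_range_self t
        exact h1
      obtain ⟨i, j, hij, hle⟩ := good_of_const_n (fun t => g (φ t)) n0 hφmem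
      exact ⟨φ i, φ j, φ.strictMono hij, hle⟩
    · push_neg at hd hn
      have hDfin : ∀ m, {t | (g t).d ≤ m}.Finite := by
        intro m
        apply (Set.Finite.biUnion (Set.finite_Iic m)
          (fun v _ => hd v)).subset
        intro t ht
        simp only [Set.mem_iUnion]
        exact ⟨(g t).d, ht, rfl⟩
      have hNfin : ∀ m, {t | (g t).n ≤ m}.Finite := by
        intro m
        apply (Set.Finite.biUnion (Set.finite_Iic m)
          (fun v _ => hn v)).subset
        intro t ht
        simp only [Set.mem_iUnion]
        exact ⟨(g t).n, ht, rfl⟩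
      have hbig : ({t | (g t).d ≤ 2 * (M * (g 0).d)} ∪
          ({t | (g t).n ≤ (2 * M) ^ (M * (g 0).d) * (g 0).n} ∪ {0})).Finite :=
        (hDfin _).union ((hNfin _).union (Set.finite_singleton 0))
      obtain ⟨t, ht⟩ := hbig.infinite_compl.nonempty
      simp only [Set.mem_compl_iff, Set.mem_union, Set.mem_singleton_iff, not_or,
        Set.mem_setOf_eq] at ht
      obtain ⟨h1, h2, h3⟩ := ht
      exact ⟨0, t, by omega, le_of_big hM (g 0) (g t) (by omega) (by omega)⟩

end RLAux

/-- The poset of all reading lists is noetherian: it has no infinite antichain and no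
infinite strictly decreasing sequence. -/
theorem readingList_noetherian (M : ℕ) (hM : 1 ≤ M) :
    (¬ ∃ g : ℕ → ReadingList M, ∀ i j : ℕ, i < j →
        ¬ (g i).le (g j) ∧ ¬ (g j).le (g i)) ∧
    (¬ ∃ g : ℕ → ReadingList M, ∀ i : ℕ,
        (g (i + 1)).le (g i) ∧ ¬ (g i).le (g (i + 1))) := by
  constructor
  · rintro ⟨g, hg⟩
    obtain ⟨i, j, hij, hle⟩ := RLAux.main_wqo hM g
    exact (hg i j hij).1 hle
  · rintro ⟨g, hg⟩
    obtain ⟨i, j, hij, hle⟩ := RLAux.main_wqo hM g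
    have hchain : ∀ k s, (g (s + k + 1)).le (g s) := by
      intro k
      induction k with
      | zero => exact fun s => (hg s).1
      | succ k ih =>
        intro s
        have e : s + (k + 1) + 1 = (s + k + 1) + 1 := by omega
        rw [e]
        exact RLAux.le_trans' (hg (s + k + 1)).1 (ih s)
    obtain ⟨m, rfl⟩ := Nat.exists_eq_add_of_lt hij
    cases m with
    | zero => exact (hg i).2 hle
    | succ m' =>
      have e : i + (m' + 1) + 1 = (i + 1) + m' + 1 := by omega
      rw [e] at hle
      exact (hg i).2 (RLAux.le_trans' hle (hchain m' (i + 1)))
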